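/- Fix real numbers q and s with 0 < q < 1 and 0 < s < 1 and set t = s². For every Λ ∈ ℂ with 0 < |Λ| < 1, the normalized (spherical) Rogers polynomials of type A₁ satisfy the Harish-Chandra-type asymptotics lim_{n → ∞} (Λ/s)ⁿ · P_n(Λ; q, t) / P_n(s; q, t) = ∏_{j=0}^∞ ((1 − t Λ² qʲ)(1 − t qʲ)) / ((1 − Λ² qʲ)(1 − t² qʲ)). (The content of Theorem 4.2(i) of the paper, formula (4.69), in the rank-one case.) -/

import Mathlib

open scoped BigOperators
open Filter

noncomputable section

/-- Symmetric monomial `M_r(X) = X^r + X^{-r}` for `r ≥ 1`, `M_0 = 1`. -/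
def Msym (r : ℕ) (X : ℂ) : ℂ := if r = 0 then 1 else X ^ r + X⁻¹ ^ r

/-- Continuous q-Hermite Laurent polynomial (Macdonald polynomial of type A₁ at t = 0). -/
def PbarA1 (q : ℝ) (n : ℕ) (X : ℂ) : ℂ :=
  Msym n X + ∑ j ∈ Finset.Icc 1 (n / 2),
    (∏ i ∈ Finset.range j, (1 - (q : ℂ) ^ (n - i)) / (1 - (q : ℂ) ^ (i + 1))) *
      Msym (n - 2 * j) X

/-- Global q-Whittaker function of type A₁. -/
def whitA1 (q : ℝ) (X Λ : ℂ) : ℂ :=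
  ∑' n : ℕ, ((q ^ ((n : ℝ) ^ 2 / 4) : ℝ) : ℂ) * X ^ n * PbarA1 q n Λ /
    ∏ j ∈ Finset.Icc 1 n, (1 - (q : ℂ) ^ j)

/-- Theta function `θ(Λ) = ∑_{j ∈ ℤ} q^{j²/4} Λ^j`. -/
def thetaA1 (q : ℝ) (Λ : ℂ) : ℂ :=
  ∑' j : ℤ, ((q ^ ((j : ℝ) ^ 2 / 4) : ℝ) : ℂ) * Λ ^ j

/-- Rogers Laurent polynomial (symmetric Macdonald polynomial of type A₁). -/
def RogersA1 (q : ℝ) (t : ℂ) (n : ℕ) (X : ℂ) : ℂ :=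
  Msym n X + ∑ j ∈ Finset.Icc 1 (n / 2),
    (∏ i ∈ Finset.range j,
      ((1 - (q : ℂ) ^ (n - i)) * (1 - t * (q : ℂ) ^ i)) /
      ((1 - (q : ℂ) ^ (1 + i)) * (1 - t * (q : ℂ) ^ (n - i - 1)))) *
    Msym (n - 2 * j) X

/-- Global q,t-spherical function of type A₁, with `t = s²`. -/
def sphA1 (q s : ℝ) (X Λ : ℂ) : ℂ :=
  ∑' n : ℕ, (s : ℂ) ^ n * ((q ^ ((n : ℝ) ^ 2 / 4) : ℝ) : ℂ) *
    RogersA1 q ((s : ℂ) ^ 2) n X * RogersA1 q ((s : ℂ) ^ 2) n Λ *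
    ∏ i ∈ Finset.range n,
      ((1 - (s : ℂ) ^ 2 * (q : ℂ) ^ i) * (1 - (s : ℂ) ^ 2 * (q : ℂ) ^ (i + 1))) /
      ((1 - ((s : ℂ) ^ 2) ^ 2 * (q : ℂ) ^ i) * (1 - (q : ℂ) ^ (i + 1)))

/-- Macdonald truncated theta weight function of type A₁. -/
def muA1 (q : ℝ) (t : ℂ) (X : ℂ) : ℂ :=
  ∏' j : ℕ, ((1 - X ^ 2 * (q : ℂ) ^ j) * (1 - X⁻¹ ^ 2 * (q : ℂ) ^ (j + 1))) /
    ((1 - t * X ^ 2 * (q : ℂ) ^ j) * (1 - t * X⁻¹ ^ 2 * (q : ℂ) ^ (j + 1)))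

namespace RogersAux

/-- coefficient of the q-binomial series -/
def coefA (q t : ℝ) (j : ℕ) : ℝ :=
  ∏ i ∈ Finset.range j, (1 - t * q ^ i) / (1 - q ^ (i + 1))

/-- coefficient of the Rogers polynomial -/
def coefC (q t : ℝ) (n j : ℕ) : ℝ :=
  ∏ i ∈ Finset.range j,
    ((1 - q ^ (n - i)) * (1 - t * q ^ i)) / ((1 - q ^ (1 + i)) * (1 - t * q ^ (n - i - 1)))

variable {q t : ℝ}

lemma one_sub_qpow_pos (hq0 : 0 < q) (hq1 : q < 1) {i : ℕ} (hi : i ≠ 0) : 0 < 1 - q ^ i := by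
  have : q ^ i < 1 := pow_lt_one₀ hq0.le hq1 hi
  linarith

lemma one_sub_t_qpow_pos (hq0 : 0 < q) (hq1 : q < 1) (ht0 : 0 < t) (ht1 : t < 1) (i : ℕ) :
    0 < 1 - t * q ^ i := by
  have h1 : q ^ i ≤ 1 := pow_le_one₀ hq0.le hq1.le
  have h2 : t * q ^ i ≤ t * 1 := by
    have := pow_pos hq0 i
    nlinarith
  nlinarith

/-- bound for the inverse products -/
lemma invprod_le (hq0 : 0 < q) (hq1 : q < 1) (j : ℕ) :
    ∏ i ∈ Finset.range j, (1 - q ^ (i + 1))⁻¹ ≤ Real.exp (q / (1 - q) ^ 2) := by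
  have hq' : 0 < 1 - q := by linarith
  have h1 : ∀ i ∈ Finset.range j, (1 - q ^ (i + 1))⁻¹ ≤ Real.exp (q ^ (i + 1) / (1 - q)) := by
    intro i _
    have hx : 0 < 1 - q ^ (i + 1) := one_sub_qpow_pos hq0 hq1 (Nat.succ_ne_zero i)
    have hxq : 1 - q ≤ 1 - q ^ (i + 1) := by
      have : q ^ (i + 1) ≤ q := by
        calc q ^ (i + 1) = q ^ i * q := by ring
        _ ≤ 1 * q := by
            have := pow_le_one₀ hq0.le hq1.le (n := i); nlinarith
        _ = q := one_mul q
      linarith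
    have hxpos : 0 < q ^ (i + 1) := pow_pos hq0 _
    have key : (1 - q ^ (i + 1))⁻¹ = 1 + q ^ (i + 1) / (1 - q ^ (i + 1)) := by
      field_simp
      ring
    have h2 : q ^ (i + 1) / (1 - q ^ (i + 1)) ≤ q ^ (i + 1) / (1 - q) := by
      gcongr
    have h3 : 1 + q ^ (i + 1) / (1 - q) ≤ Real.exp (q ^ (i + 1) / (1 - q)) := by
      have := Real.add_one_le_exp (q ^ (i + 1) / (1 - q)); linarith
    linarith [key, h2, h3]
  calc ∏ i ∈ Finset.range j, (1 - q ^ (i + 1))⁻¹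
      ≤ ∏ i ∈ Finset.range j, Real.exp (q ^ (i + 1) / (1 - q)) := by
        apply Finset.prod_le_prod
        · intro i _
          have hx : 0 < 1 - q ^ (i + 1) := one_sub_qpow_pos hq0 hq1 (Nat.succ_ne_zero i)
          positivity
        · exact h1
    _ = Real.exp (∑ i ∈ Finset.range j, q ^ (i + 1) / (1 - q)) := by
        rw [Real.exp_sum]
    _ ≤ Real.exp (q / (1 - q) ^ 2) := by
        apply Real.exp_le_exp.mpr
        have hsum : ∑ i ∈ Finset.range j, q ^ i ≤ (1 - q)⁻¹ := by
          have hs : Summable (fun i : ℕ => q ^ i) :=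
            summable_geometric_of_lt_one hq0.le hq1
          calc ∑ i ∈ Finset.range j, q ^ i ≤ ∑' i : ℕ, q ^ i := by
                apply hs.sum_le_tsum _ (fun i _ => (pow_pos hq0 i).le)
            _ = (1 - q)⁻¹ := tsum_geometric_of_lt_one hq0.le hq1
        have : ∑ i ∈ Finset.range j, q ^ (i + 1) / (1 - q)
            = (∑ i ∈ Finset.range j, q ^ i) * (q / (1 - q)) := by
          rw [Finset.sum_mul]
          apply Finset.sum_congr rfl
          intro i _
          field_simp
          ring
        rw [this]
        have hq2 : 0 < q / (1 - q) := by positivity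
        calc (∑ i ∈ Finset.range j, q ^ i) * (q / (1 - q)) ≤ (1 - q)⁻¹ * (q / (1 - q)) := by
              gcongr
          _ = q / (1 - q) ^ 2 := by rw [inv_mul_eq_div, div_div, ← sq]

lemma coefA_pos (hq0 : 0 < q) (hq1 : q < 1) (ht0 : 0 < t) (ht1 : t < 1) (j : ℕ) :
    0 < coefA q t j := by
  apply Finset.prod_pos
  intro i _
  exact div_pos (one_sub_t_qpow_pos hq0 hq1 ht0 ht1 i)
    (one_sub_qpow_pos hq0 hq1 (Nat.succ_ne_zero i))

lemma coefA_le (hq0 : 0 < q) (hq1 : q < 1) (ht0 : 0 < t) (ht1 : t < 1) (j : ℕ) :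
    coefA q t j ≤ Real.exp (q / (1 - q) ^ 2) := by
  refine le_trans ?_ (invprod_le hq0 hq1 j)
  apply Finset.prod_le_prod
  · intro i _
    exact le_of_lt (div_pos (one_sub_t_qpow_pos hq0 hq1 ht0 ht1 i)
      (one_sub_qpow_pos hq0 hq1 (Nat.succ_ne_zero i)))
  · intro i _
    have hx : 0 < 1 - q ^ (i + 1) := one_sub_qpow_pos hq0 hq1 (Nat.succ_ne_zero i)
    rw [← one_div]
    gcongr
    nlinarith [pow_pos hq0 i]

lemma coefC_nonneg (hq0 : 0 < q) (hq1 : q < 1) (ht0 : 0 < t) (ht1 : t < 1) (n j : ℕ) :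
    0 ≤ coefC q t n j := by
  apply Finset.prod_nonneg
  intro i _
  apply div_nonneg
  · have h1 : q ^ (n - i) ≤ 1 := pow_le_one₀ hq0.le hq1.le
    have h2 := one_sub_t_qpow_pos hq0 hq1 ht0 ht1 i
    nlinarith
  · have h1 := one_sub_qpow_pos hq0 hq1 (i := 1 + i) (by omega)
    have h2 := one_sub_t_qpow_pos hq0 hq1 ht0 ht1 (n - i - 1)
    nlinarith

lemma coefC_le (hq0 : 0 < q) (hq1 : q < 1) (ht0 : 0 < t) (ht1 : t < 1) {n j : ℕ}
    (hj : 2 * j ≤ n) : coefC q t n j ≤ Real.exp (q / (1 - q) ^ 2) := by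
  refine le_trans ?_ (invprod_le hq0 hq1 j)
  apply Finset.prod_le_prod
  · intro i _
    have h1 : q ^ (n - i) ≤ 1 := pow_le_one₀ hq0.le hq1.le
    have h2 := one_sub_t_qpow_pos hq0 hq1 ht0 ht1 i
    have h3 := one_sub_qpow_pos hq0 hq1 (i := 1 + i) (by omega)
    have h4 := one_sub_t_qpow_pos hq0 hq1 ht0 ht1 (n - i - 1)
    apply div_nonneg (by nlinarith) (by nlinarith)
  · intro i hi
    rw [Finset.mem_range] at hi
    have hile : i ≤ n - i - 1 := by omega
    have hqle : q ^ (n - i - 1) ≤ q ^ i := pow_le_pow_of_le_one hq0.le hq1.le hile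
    have h2 := one_sub_t_qpow_pos hq0 hq1 ht0 ht1 i
    have h3 := one_sub_qpow_pos hq0 hq1 (i := 1 + i) (by omega)
    have h4 : 1 - t * q ^ i ≤ 1 - t * q ^ (n - i - 1) := by nlinarith
    have h1a : 0 ≤ 1 - q ^ (n - i) := by
      have : q ^ (n - i) ≤ 1 := pow_le_one₀ hq0.le hq1.le
      linarith
    have h1b : 1 - q ^ (n - i) ≤ 1 := by
      have := pow_pos hq0 (n - i); linarith
    calc ((1 - q ^ (n - i)) * (1 - t * q ^ i)) / ((1 - q ^ (1 + i)) * (1 - t * q ^ (n - i - 1)))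
        ≤ (1 * (1 - t * q ^ i)) / ((1 - q ^ (1 + i)) * (1 - t * q ^ i)) := by
          apply div_le_div₀ (by nlinarith) (by nlinarith) (by nlinarith) (by nlinarith)
      _ = (1 - q ^ (i + 1))⁻¹ := by
          rw [one_mul, add_comm 1 i, mul_comm (1 - q ^ (i+1)), ← div_div, div_self h2.ne', one_div]

lemma coefA_zero : coefA q t 0 = 1 := by simp [coefA]

lemma coefA_rec (hq0 : 0 < q) (hq1 : q < 1) (j : ℕ) :
    coefA q t (j + 1) * (1 - q ^ (j + 1)) = coefA q t j * (1 - t * q ^ j) := by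
  have hx : 1 - q ^ (j + 1) ≠ 0 := (one_sub_qpow_pos hq0 hq1 (Nat.succ_ne_zero j)).ne'
  rw [coefA, Finset.prod_range_succ, ← coefA]
  rw [mul_assoc, div_mul_cancel₀ _ hx]

/-- the q-binomial series -/
def Sq (q t : ℝ) (z : ℂ) : ℂ := ∑' j : ℕ, ((coefA q t j : ℝ) : ℂ) * z ^ j

section qbinom

variable (hq0 : 0 < q) (hq1 : q < 1) (ht0 : 0 < t) (ht1 : t < 1)

include hq0 hq1 ht0 ht1

lemma summableF {z : ℂ} (hz : ‖z‖ < 1) :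
    Summable (fun j : ℕ => ((coefA q t j : ℝ) : ℂ) * z ^ j) := by
  apply Summable.of_norm_bounded (g := fun j => Real.exp (q / (1 - q) ^ 2) * ‖z‖ ^ j)
    ((summable_geometric_of_lt_one (norm_nonneg z) hz).mul_left _)
  intro j
  rw [norm_mul, Complex.norm_real, norm_pow, Real.norm_eq_abs,
    abs_of_pos (coefA_pos hq0 hq1 ht0 ht1 j)]
  have := coefA_le hq0 hq1 ht0 ht1 j
  have h2 : (0:ℝ) ≤ ‖z‖ ^ j := by positivity
  nlinarith

lemma funEq {z : ℂ} (hz : ‖z‖ < 1) :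
    (1 - z) * Sq q t z = (1 - (t : ℂ) * z) * Sq q t ((q : ℂ) * z) := by
  set F : ℕ → ℂ := fun j => ((coefA q t j : ℝ) : ℂ) * z ^ j with hFdef
  set G : ℕ → ℂ := fun j => ((coefA q t j : ℝ) : ℂ) * ((q : ℂ) * z) ^ j with hGdef
  set E : ℕ → ℂ := fun j => (((coefA q t j : ℝ) : ℂ) * (1 - (q : ℂ) ^ j)) * z ^ j with hEdef
  have hqz : ‖(q : ℂ) * z‖ < 1 := by
    rw [norm_mul, Complex.norm_real, Real.norm_eq_abs, abs_of_pos hq0]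
    nlinarith [norm_nonneg z]
  have hF : Summable F := summableF hq0 hq1 ht0 ht1 hz
  have hG : Summable G := summableF hq0 hq1 ht0 ht1 hqz
  have hE : Summable E := by
    apply Summable.of_norm_bounded (g := fun j => (2 * Real.exp (q / (1 - q) ^ 2)) * ‖z‖ ^ j)
      ((summable_geometric_of_lt_one (norm_nonneg z) hz).mul_left _)
    intro j
    rw [norm_mul, norm_mul, Complex.norm_real, norm_pow, Real.norm_eq_abs,
      abs_of_pos (coefA_pos hq0 hq1 ht0 ht1 j)]
    have h1 := coefA_le hq0 hq1 ht0 ht1 j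
    have h2 : ‖(1 : ℂ) - (q : ℂ) ^ j‖ ≤ 2 := by
      calc ‖(1 : ℂ) - (q : ℂ) ^ j‖ ≤ ‖(1 : ℂ)‖ + ‖(q : ℂ) ^ j‖ := norm_sub_le _ _
        _ ≤ 1 + 1 := by
            rw [norm_one, norm_pow, Complex.norm_real, Real.norm_eq_abs, abs_of_pos hq0]
            have : q ^ j ≤ 1 := pow_le_one₀ hq0.le hq1.le
            linarith
        _ = 2 := by norm_num
    have h3 : (0:ℝ) ≤ ‖z‖ ^ j := by positivity
    have h4 : 0 < coefA q t j := coefA_pos hq0 hq1 ht0 ht1 j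
    have h5 : coefA q t j * ‖(1 : ℂ) - (q : ℂ) ^ j‖ ≤ Real.exp (q / (1 - q) ^ 2) * 2 :=
      mul_le_mul h1 h2 (norm_nonneg _) (Real.exp_pos _).le
    calc coefA q t j * ‖(1 : ℂ) - (q : ℂ) ^ j‖ * ‖z‖ ^ j
        ≤ (Real.exp (q / (1 - q) ^ 2) * 2) * ‖z‖ ^ j := mul_le_mul_of_nonneg_right h5 h3
      _ = 2 * Real.exp (q / (1 - q) ^ 2) * ‖z‖ ^ j := by ring
  have hE' : Summable (fun j => E (j + 1)) := (summable_nat_add_iff 1).mpr hE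
  have key : ∀ j : ℕ, (1 - z) * F j - (1 - (t : ℂ) * z) * G j = E j - E (j + 1) := by
    intro j
    have hrec : (((coefA q t (j + 1) : ℝ)) : ℂ) * (1 - (q : ℂ) ^ (j + 1))
        = (((coefA q t j : ℝ)) : ℂ) * (1 - (t : ℂ) * (q : ℂ) ^ j) := by
      have := coefA_rec (t := t) hq0 hq1 j
      push_cast
      exact_mod_cast congrArg (Complex.ofReal) this
    simp only [hFdef, hGdef, hEdef]
    rw [hrec]
    ring
  have lhs : (1 - z) * Sq q t z - (1 - (t : ℂ) * z) * Sq q t ((q : ℂ) * z) = 0 := by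
    have e1 : (1 - z) * Sq q t z = ∑' j, (1 - z) * F j := (tsum_mul_left).symm
    have e2 : (1 - (t : ℂ) * z) * Sq q t ((q : ℂ) * z) = ∑' j, (1 - (t : ℂ) * z) * G j :=
      (tsum_mul_left).symm
    rw [e1, e2, ← (hF.mul_left _).tsum_sub (hG.mul_left _)]
    have e3 : ∑' j, ((1 - z) * F j - (1 - (t : ℂ) * z) * G j) = ∑' j, (E j - E (j + 1)) :=
      tsum_congr key
    rw [e3, hE.tsum_sub hE']
    have e4 := hE.tsum_eq_zero_add
    have e5 : E 0 = 0 := by simp [hEdef, coefA_zero]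
    rw [e4, e5]
    ring
  exact sub_eq_zero.mp lhs

omit hq0 hq1 ht0 ht1 in
lemma one_sub_ne' {w : ℂ} (hw : ‖w‖ < 1) : (1 : ℂ) - w ≠ 0 := by
  intro h
  have : (1 : ℂ) = w := by linear_combination h
  rw [← this] at hw
  simp at hw

lemma iterEq {z : ℂ} (hz : ‖z‖ < 1) (m : ℕ) :
    Sq q t z = (∏ i ∈ Finset.range m, (1 - (t : ℂ) * z * (q : ℂ) ^ i) / (1 - z * (q : ℂ) ^ i))
      * Sq q t ((q : ℂ) ^ m * z) := by
  induction m with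
  | zero => simp
  | succ m ih =>
    have hzm : ‖(q : ℂ) ^ m * z‖ < 1 := by
      rw [norm_mul, norm_pow, Complex.norm_real, Real.norm_eq_abs, abs_of_pos hq0]
      have h1 : q ^ m ≤ 1 := pow_le_one₀ hq0.le hq1.le
      nlinarith [norm_nonneg z, pow_pos hq0 m]
    have step := funEq hq0 hq1 ht0 ht1 hzm
    have hne : (1 : ℂ) - (q : ℂ) ^ m * z ≠ 0 := one_sub_ne' hzm
    have step' : Sq q t ((q : ℂ) ^ m * z)
        = ((1 - (t : ℂ) * ((q : ℂ) ^ m * z)) / (1 - (q : ℂ) ^ m * z))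
          * Sq q t ((q : ℂ) * ((q : ℂ) ^ m * z)) := by
      rw [div_mul_eq_mul_div, eq_div_iff hne]
      linear_combination step
    rw [ih, step', Finset.prod_range_succ]
    have e1 : (q : ℂ) * ((q : ℂ) ^ m * z) = (q : ℂ) ^ (m + 1) * z := by ring
    rw [e1]
    have e2 : (1 - (t : ℂ) * z * (q : ℂ) ^ m) / (1 - z * (q : ℂ) ^ m)
        = (1 - (t : ℂ) * ((q : ℂ) ^ m * z)) / (1 - (q : ℂ) ^ m * z) := by
      ring_nf
    rw [e2]
    ring

lemma S_tendsto_one {z : ℂ} (hz : ‖z‖ < 1) :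
    Tendsto (fun m : ℕ => Sq q t ((q : ℂ) ^ m * z)) atTop (nhds 1) := by
  set C := Real.exp (q / (1 - q) ^ 2) with hC
  have hbd : ∀ w : ℂ, ‖w‖ ≤ ‖z‖ → ‖Sq q t w - 1‖ ≤ C * (1 - ‖z‖)⁻¹ * ‖w‖ := by
    intro w hw
    have hw1 : ‖w‖ < 1 := lt_of_le_of_lt hw hz
    set F : ℕ → ℂ := fun j => ((coefA q t j : ℝ) : ℂ) * w ^ j with hFdef
    have hsum : Summable F := summableF hq0 hq1 ht0 ht1 hw1
    have e0 : Sq q t w = 1 + ∑' j : ℕ, F (j + 1) := by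
      rw [Sq, ← hFdef, hsum.tsum_eq_zero_add]
      simp [hFdef, coefA_zero]
    rw [e0]
    have e1 : (1 : ℂ) + (∑' j : ℕ, F (j + 1)) - 1 = ∑' j : ℕ, F (j + 1) := by ring
    rw [e1]
    have hsum' : Summable (fun j : ℕ => F (j + 1)) := (summable_nat_add_iff 1).mpr hsum
    have hFb : ∀ j : ℕ, ‖F (j + 1)‖ ≤ (C * ‖w‖) * ‖z‖ ^ j := by
      intro j
      rw [hFdef]
      simp only
      rw [norm_mul, Complex.norm_real, norm_pow, Real.norm_eq_abs,
        abs_of_pos (coefA_pos hq0 hq1 ht0 ht1 (j + 1))]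
      have h1 := coefA_le hq0 hq1 ht0 ht1 (j + 1)
      have h2 : ‖w‖ ^ (j + 1) ≤ ‖w‖ * ‖z‖ ^ j := by
        rw [pow_succ, mul_comm]
        gcongr
      have h3 : 0 < C := Real.exp_pos _
      calc coefA q t (j + 1) * ‖w‖ ^ (j + 1) ≤ C * (‖w‖ * ‖z‖ ^ j) := by
            apply mul_le_mul h1 h2 (by positivity) h3.le
        _ = C * ‖w‖ * ‖z‖ ^ j := by ring
    calc ‖∑' j : ℕ, F (j + 1)‖ ≤ ∑' j : ℕ, ‖F (j + 1)‖ := norm_tsum_le_tsum_norm hsum'.norm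
      _ ≤ ∑' j : ℕ, (C * ‖w‖) * ‖z‖ ^ j :=
          Summable.tsum_le_tsum hFb hsum'.norm
            ((summable_geometric_of_lt_one (norm_nonneg z) hz).mul_left _)
      _ = (C * ‖w‖) * (1 - ‖z‖)⁻¹ := by
          rw [tsum_mul_left, tsum_geometric_of_lt_one (norm_nonneg z) hz]
      _ = C * (1 - ‖z‖)⁻¹ * ‖w‖ := by ring
  have hzero : Tendsto (fun m : ℕ => Sq q t ((q : ℂ) ^ m * z) - 1) atTop (nhds 0) := by
    have hg : Tendsto (fun m : ℕ => (C * (1 - ‖z‖)⁻¹ * ‖z‖) * q ^ m) atTop (nhds 0) := by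
      simpa using (tendsto_pow_atTop_nhds_zero_of_lt_one hq0.le hq1).const_mul
        (C * (1 - ‖z‖)⁻¹ * ‖z‖)
    refine squeeze_zero_norm ?_ hg
    · intro m
      have hwz : ‖(q : ℂ) ^ m * z‖ ≤ ‖z‖ := by
        rw [norm_mul, norm_pow, Complex.norm_real, Real.norm_eq_abs, abs_of_pos hq0]
        have h1 : q ^ m ≤ 1 := pow_le_one₀ hq0.le hq1.le
        nlinarith [norm_nonneg z, pow_pos hq0 m]
      have := hbd _ hwz
      calc ‖Sq q t ((q : ℂ) ^ m * z) - 1‖ ≤ C * (1 - ‖z‖)⁻¹ * ‖(q : ℂ) ^ m * z‖ := this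
        _ = (C * (1 - ‖z‖)⁻¹ * ‖z‖) * q ^ m := by
            rw [norm_mul, norm_pow, Complex.norm_real, Real.norm_eq_abs, abs_of_pos hq0]
            ring
  have := hzero.add_const 1
  simpa using this

omit ht0 ht1 in
lemma mult_ratio (a b : ℂ) (ha : ‖a‖ < 1) (hb : ‖b‖ < 1) :
    Multipliable (fun i : ℕ => (1 - a * (q : ℂ) ^ i) / (1 - b * (q : ℂ) ^ i)) := by
  have hqpow : ∀ (c : ℂ), ‖c‖ < 1 → ∀ i : ℕ, ‖c * (q : ℂ) ^ i‖ < 1 := by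
    intro c hc i
    rw [norm_mul, norm_pow, Complex.norm_real, Real.norm_eq_abs, abs_of_pos hq0]
    have h1 : q ^ i ≤ 1 := pow_le_one₀ hq0.le hq1.le
    nlinarith [norm_nonneg c, pow_pos hq0 i]
  have hne : ∀ i : ℕ, (1 - a * (q : ℂ) ^ i) / (1 - b * (q : ℂ) ^ i) ≠ 0 := fun i =>
    div_ne_zero (one_sub_ne' (hqpow a ha i)) (one_sub_ne' (hqpow b hb i))
  apply Complex.multipliable_of_summable_log
  -- summability of logs
  set c : ℕ → ℂ := fun i => (b - a) * (q : ℂ) ^ i / (1 - b * (q : ℂ) ^ i) with hcdef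
  have hfc : ∀ i, (1 - a * (q : ℂ) ^ i) / (1 - b * (q : ℂ) ^ i) = 1 + c i := by
    intro i
    have h := one_sub_ne' (hqpow b hb i)
    simp only [hcdef]
    rw [one_add_div h]
    congr 1
    ring
  have hcb : ∀ i, ‖c i‖ ≤ (‖b - a‖ * (1 - ‖b‖)⁻¹) * q ^ i := by
    intro i
    rw [hcdef]
    simp only
    rw [norm_div, norm_mul, norm_pow, Complex.norm_real, Real.norm_eq_abs, abs_of_pos hq0]
    have hlow : 1 - ‖b‖ ≤ ‖1 - b * (q : ℂ) ^ i‖ := by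
      have h1 : ‖b * (q : ℂ) ^ i‖ ≤ ‖b‖ := by
        rw [norm_mul, norm_pow, Complex.norm_real, Real.norm_eq_abs, abs_of_pos hq0]
        have h2 : q ^ i ≤ 1 := pow_le_one₀ hq0.le hq1.le
        nlinarith [norm_nonneg b, pow_pos hq0 i]
      calc 1 - ‖b‖ ≤ 1 - ‖b * (q : ℂ) ^ i‖ := by linarith
        _ ≤ ‖1 - b * (q : ℂ) ^ i‖ := by
            have := norm_sub_norm_le (1 : ℂ) (b * (q : ℂ) ^ i)
            simpa using this
    have hbpos : 0 < 1 - ‖b‖ := by linarith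
    rw [div_le_iff₀ (lt_of_lt_of_le hbpos hlow)]
    have h3 : 0 ≤ ‖b - a‖ := norm_nonneg _
    have h4 : 0 < q ^ i := pow_pos hq0 i
    calc ‖b - a‖ * q ^ i = (‖b - a‖ * q ^ i) * ((1 - ‖b‖)⁻¹ * (1 - ‖b‖)) := by
          rw [inv_mul_cancel₀ hbpos.ne', mul_one]
      _ ≤ (‖b - a‖ * q ^ i) * ((1 - ‖b‖)⁻¹ * ‖1 - b * (q : ℂ) ^ i‖) := by
          have h5 : 0 < (1 - ‖b‖)⁻¹ := by positivity
          have h6 : 0 ≤ ‖b - a‖ * q ^ i := by positivity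
          apply mul_le_mul_of_nonneg_left _ h6
          exact mul_le_mul_of_nonneg_left hlow h5.le
      _ = ‖b - a‖ * (1 - ‖b‖)⁻¹ * q ^ i * ‖1 - b * (q : ℂ) ^ i‖ := by ring
  have hctend : Tendsto (fun i => ‖c i‖) atTop (nhds 0) := by
    have hg : Tendsto (fun i : ℕ => (‖b - a‖ * (1 - ‖b‖)⁻¹) * q ^ i) atTop (nhds 0) := by
      simpa using (tendsto_pow_atTop_nhds_zero_of_lt_one hq0.le hq1).const_mul
        (‖b - a‖ * (1 - ‖b‖)⁻¹)
    refine squeeze_zero_norm ?_ hg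
    intro i; rw [Real.norm_eq_abs, abs_of_nonneg (norm_nonneg _)]; exact hcb i
  apply Summable.of_norm_bounded_eventually
    (g := fun i => 3 / 2 * ((‖b - a‖ * (1 - ‖b‖)⁻¹) * q ^ i))
    (((summable_geometric_of_lt_one hq0.le hq1).mul_left _).mul_left _)
  rw [Nat.cofinite_eq_atTop]
  have hev : ∀ᶠ i in atTop, ‖c i‖ ≤ 1 / 2 := by
    have := hctend.eventually_lt_const (by norm_num : (0:ℝ) < 1/2)
    filter_upwards [this] with i hi
    linarith
  filter_upwards [hev] with i hi
  rw [hfc i]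
  calc ‖Complex.log (1 + c i)‖ ≤ 3 / 2 * ‖c i‖ :=
        Complex.norm_log_one_add_half_le_self (by linarith)
    _ ≤ 3 / 2 * ((‖b - a‖ * (1 - ‖b‖)⁻¹) * q ^ i) := by
        have := hcb i; linarith

theorem qbinom {z : ℂ} (hz : ‖z‖ < 1) :
    Sq q t z = ∏' i : ℕ, (1 - (t : ℂ) * z * (q : ℂ) ^ i) / (1 - z * (q : ℂ) ^ i) := by
  have htz : ‖(t : ℂ) * z‖ < 1 := by
    rw [norm_mul, Complex.norm_real, Real.norm_eq_abs, abs_of_pos ht0]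
    nlinarith [norm_nonneg z]
  have hmult : Multipliable (fun i : ℕ =>
      (1 - (t : ℂ) * z * (q : ℂ) ^ i) / (1 - z * (q : ℂ) ^ i)) := by
    have := mult_ratio hq0 hq1 ((t : ℂ) * z) z htz hz
    simpa [mul_assoc] using this
  have h1 := hmult.hasProd.tendsto_prod_nat
  have h2 := (h1.mul (S_tendsto_one hq0 hq1 ht0 ht1 hz))
  have h3 : (fun m : ℕ => (∏ i ∈ Finset.range m,
      (1 - (t : ℂ) * z * (q : ℂ) ^ i) / (1 - z * (q : ℂ) ^ i)) * Sq q t ((q : ℂ) ^ m * z))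
      = fun _ => Sq q t z := funext fun m => (iterEq hq0 hq1 ht0 ht1 hz m).symm
  rw [h3] at h2
  have h4 := tendsto_nhds_unique tendsto_const_nhds h2
  rw [h4, mul_one]

end qbinom

section limit

variable (hq0 : 0 < q) (hq1 : q < 1) (ht0 : 0 < t) (ht1 : t < 1)
include hq0 hq1 ht0 ht1

theorem rogers_limit {X : ℂ} (hX0 : X ≠ 0) (hX1 : ‖X‖ < 1) :
    Tendsto (fun n : ℕ => X ^ n * RogersA1 q ((t : ℝ) : ℂ) n X) atTop
      (nhds (Sq q t (X ^ 2))) := by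
  set C := Real.exp (q / (1 - q) ^ 2) with hC
  have hCpos : 0 < C := Real.exp_pos _
  set f : ℕ → ℕ → ℂ := fun n j =>
    if j ≤ n / 2 then ((coefC q t n j : ℝ) : ℂ) * (X ^ n * Msym (n - 2 * j) X) else 0
    with hf
  set g : ℕ → ℂ := fun j => ((coefA q t j : ℝ) : ℂ) * (X ^ 2) ^ j with hg
  have hXsq : ‖X‖ ^ 2 < 1 := by nlinarith [norm_nonneg X]
  have hsumb : Summable (fun j : ℕ => 2 * C * (‖X‖ ^ 2) ^ j) :=
    (summable_geometric_of_lt_one (by positivity) hXsq).mul_left _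
  -- norm bound for X^n * Msym (n - 2j) X
  have hM : ∀ n j : ℕ, 2 * j ≤ n → ‖X ^ n * Msym (n - 2 * j) X‖ ≤ 2 * ‖X‖ ^ (2 * j) := by
    intro n j hjn
    rcases Nat.eq_zero_or_pos (n - 2 * j) with h0 | hpos
    · have hn : n = 2 * j := by omega
      rw [Msym, if_pos h0, mul_one, norm_pow, hn]
      nlinarith [pow_nonneg (norm_nonneg X) (2 * j)]
    · rw [Msym, if_neg hpos.ne']
      have h2 : X ^ n * X⁻¹ ^ (n - 2 * j) = X ^ (2 * j) := by
        have hn : n = 2 * j + (n - 2 * j) := by omega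
        rw [inv_pow]
        nth_rewrite 1 [hn]
        rw [pow_add, mul_assoc, mul_inv_cancel₀ (pow_ne_zero _ hX0), mul_one]
      have h3 : X ^ n * X ^ (n - 2 * j) = X ^ (n + (n - 2 * j)) := (pow_add X n _).symm
      calc ‖X ^ n * (X ^ (n - 2 * j) + X⁻¹ ^ (n - 2 * j))‖
          ≤ ‖X ^ n * X ^ (n - 2 * j)‖ + ‖X ^ n * X⁻¹ ^ (n - 2 * j)‖ := by
            rw [mul_add]; exact norm_add_le _ _
        _ = ‖X‖ ^ (n + (n - 2 * j)) + ‖X‖ ^ (2 * j) := by rw [h2, h3, norm_pow, norm_pow]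
        _ ≤ ‖X‖ ^ (2 * j) + ‖X‖ ^ (2 * j) := by
            have := pow_le_pow_of_le_one (norm_nonneg X) hX1.le
              (show 2 * j ≤ n + (n - 2 * j) by omega)
            linarith
        _ = 2 * ‖X‖ ^ (2 * j) := by ring
  -- uniform bound
  have hbd : ∀ n j : ℕ, ‖f n j‖ ≤ 2 * C * (‖X‖ ^ 2) ^ j := by
    intro n j
    rw [hf]
    simp only
    by_cases hj : j ≤ n / 2
    · rw [if_pos hj, norm_mul, Complex.norm_real, Real.norm_eq_abs,
        abs_of_nonneg (coefC_nonneg hq0 hq1 ht0 ht1 n j)]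
      have hjn : 2 * j ≤ n := by omega
      have h1 := coefC_le hq0 hq1 ht0 ht1 hjn
      have h2 := hM n j hjn
      calc coefC q t n j * ‖X ^ n * Msym (n - 2 * j) X‖ ≤ C * (2 * ‖X‖ ^ (2 * j)) :=
            mul_le_mul h1 h2 (norm_nonneg _) hCpos.le
        _ = 2 * C * (‖X‖ ^ 2) ^ j := by rw [← pow_mul]; ring
    · rw [if_neg hj, norm_zero]
      positivity
  -- pointwise limits
  have hab : ∀ j : ℕ, Tendsto (fun n => f n j) atTop (nhds (g j)) := by
    intro j
    have hcoef : Tendsto (fun n => coefC q t n j) atTop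
        (nhds (∏ i ∈ Finset.range j, (1 * (1 - t * q ^ i)) / ((1 - q ^ (1 + i)) * (1 - t * 0)))) := by
      simp only [coefC]
      apply tendsto_finset_prod
      intro i _
      have t1 : Tendsto (fun n : ℕ => q ^ (n - i)) atTop (nhds 0) :=
        (tendsto_pow_atTop_nhds_zero_of_lt_one hq0.le hq1).comp (tendsto_sub_atTop_nat i)
      have t2 : Tendsto (fun n : ℕ => q ^ (n - i - 1)) atTop (nhds 0) := by
        have := (tendsto_pow_atTop_nhds_zero_of_lt_one hq0.le hq1).comp
          (tendsto_sub_atTop_nat (i + 1))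
        simpa [Nat.sub_sub, Function.comp_def] using this
      have hnum : Tendsto (fun n : ℕ => (1 - q ^ (n - i)) * (1 - t * q ^ i)) atTop
          (nhds (1 * (1 - t * q ^ i))) := by
        have := (tendsto_const_nhds (x := (1:ℝ)) (f := atTop)).sub t1
        simpa using this.mul tendsto_const_nhds
      have hden : Tendsto (fun n : ℕ => (1 - q ^ (1 + i)) * (1 - t * q ^ (n - i - 1))) atTop
          (nhds ((1 - q ^ (1 + i)) * (1 - t * 0))) := by
        apply tendsto_const_nhds.mul
        exact tendsto_const_nhds.sub (t2.const_mul t)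
      apply hnum.div hden
      have h3 := one_sub_qpow_pos hq0 hq1 (i := 1 + i) (by omega)
      simp only [mul_zero, sub_zero, mul_one]
      exact h3.ne'
    have hval : (∏ i ∈ Finset.range j, (1 * (1 - t * q ^ i)) / ((1 - q ^ (1 + i)) * (1 - t * 0)))
        = coefA q t j := by
      rw [coefA]
      apply Finset.prod_congr rfl
      intro i _
      rw [add_comm 1 i]
      norm_num
    rw [hval] at hcoef
    have hcoefC : Tendsto (fun n => ((coefC q t n j : ℝ) : ℂ)) atTop
        (nhds ((coefA q t j : ℝ) : ℂ)) := (Complex.continuous_ofReal.tendsto _).comp hcoef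
    have hpow : Tendsto (fun n : ℕ => X ^ (2 * n - 2 * j)) atTop (nhds 0) := by
      have hgt : Tendsto (fun n : ℕ => ‖X‖ ^ n) atTop (nhds 0) :=
        tendsto_pow_atTop_nhds_zero_of_lt_one (norm_nonneg X) hX1
      refine squeeze_zero_norm' ?_ hgt
      filter_upwards [eventually_ge_atTop (2 * j)] with n hn
      rw [norm_pow]
      exact pow_le_pow_of_le_one (norm_nonneg X) hX1.le (by omega)
    have hmain := hcoefC.mul ((hpow.add_const (X ^ (2 * j))))
    have heq' : (fun n : ℕ => ((coefC q t n j : ℝ) : ℂ) * (X ^ (2 * n - 2 * j) + X ^ (2 * j)))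
        =ᶠ[atTop] fun n => f n j := by
      filter_upwards [eventually_ge_atTop (2 * j + 1)] with n hn
      have hj2 : j ≤ n / 2 := by omega
      have hr : n - 2 * j ≠ 0 := by omega
      rw [hf]
      simp only [if_pos hj2]
      rw [Msym, if_neg hr]
      congr 1
      rw [mul_add]
      congr 1
      · rw [← pow_add]
        congr 1
        omega
      · have hn2 : n = 2 * j + (n - 2 * j) := by omega
        rw [inv_pow]
        nth_rewrite 1 [hn2]
        rw [pow_add, mul_assoc, mul_inv_cancel₀ (pow_ne_zero _ hX0), mul_one]
    have := hmain.congr' heq'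
    have hgj : ((coefA q t j : ℝ) : ℂ) * (0 + X ^ (2 * j)) = g j := by
      rw [hg]
      simp only [zero_add]
      rw [← pow_mul]
    rwa [hgj] at this
  have htend := tendsto_tsum_of_dominated_convergence hsumb hab (Eventually.of_forall hbd)
  have hfin : ∀ n : ℕ, ∑' j, f n j = X ^ n * RogersA1 q ((t : ℝ) : ℂ) n X := by
    intro n
    have hsupp : ∀ j ∉ Finset.range (n / 2 + 1), f n j = 0 := by
      intro j hjmem
      rw [Finset.mem_range] at hjmem
      have : ¬ j ≤ n / 2 := by omega
      rw [hf]; simp only [if_neg this]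
    rw [tsum_eq_sum hsupp]
    have hins : Finset.range (n / 2 + 1) = insert 0 (Finset.Icc 1 (n / 2)) := by
      ext x
      simp only [Finset.mem_range, Finset.mem_insert, Finset.mem_Icc, Nat.lt_succ_iff]
      omega
    rw [hins, Finset.sum_insert (by simp)]
    have h0 : f n 0 = X ^ n * Msym n X := by
      rw [hf]
      simp [coefC]
    have hterm : ∀ j ∈ Finset.Icc 1 (n / 2), f n j
        = X ^ n * ((∏ i ∈ Finset.range j,
            ((1 - (q : ℂ) ^ (n - i)) * (1 - ((t : ℝ) : ℂ) * (q : ℂ) ^ i)) /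
            ((1 - (q : ℂ) ^ (1 + i)) * (1 - ((t : ℝ) : ℂ) * (q : ℂ) ^ (n - i - 1)))) *
          Msym (n - 2 * j) X) := by
      intro j hjmem
      rw [Finset.mem_Icc] at hjmem
      rw [hf]
      simp only [if_pos hjmem.2]
      have hcast : ((coefC q t n j : ℝ) : ℂ) = ∏ i ∈ Finset.range j,
          ((1 - (q : ℂ) ^ (n - i)) * (1 - ((t : ℝ) : ℂ) * (q : ℂ) ^ i)) /
          ((1 - (q : ℂ) ^ (1 + i)) * (1 - ((t : ℝ) : ℂ) * (q : ℂ) ^ (n - i - 1))) := by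
        rw [coefC]
        push_cast
        rfl
      rw [hcast]
      ring
    rw [Finset.sum_congr rfl hterm, h0, RogersA1, mul_add, Finset.mul_sum]
  have hgeq : (∑' j, g j) = Sq q t (X ^ 2) := rfl
  rw [← hgeq]
  exact htend.congr hfin

end limit
end RogersAux

open RogersAux

/-- Harish-Chandra-type asymptotics of the normalized (spherical)
Rogers polynomials of type A₁. -/
theorem rogersA1_spherical_asymptotics (q s : ℝ) (hq0 : 0 < q) (hq1 : q < 1)
    (hs0 : 0 < s) (hs1 : s < 1) (Λ : ℂ) (hΛ0 : Λ ≠ 0) (hΛ1 : ‖Λ‖ < 1) :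
    Filter.Tendsto (fun n : ℕ =>
        (Λ / (s : ℂ)) ^ n * RogersA1 q ((s : ℂ) ^ 2) n Λ / RogersA1 q ((s : ℂ) ^ 2) n (s : ℂ))
      Filter.atTop
      (nhds (∏' j : ℕ,
        ((1 - (s : ℂ) ^ 2 * Λ ^ 2 * (q : ℂ) ^ j) * (1 - (s : ℂ) ^ 2 * (q : ℂ) ^ j)) /
        ((1 - Λ ^ 2 * (q : ℂ) ^ j) * (1 - ((s : ℂ) ^ 2) ^ 2 * (q : ℂ) ^ j)))) := by

  set t : ℝ := s ^ 2 with htdef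
  have ht0 : 0 < t := by positivity
  have ht1 : t < 1 := by rw [htdef]; nlinarith
  have hcast : ((s : ℂ)) ^ 2 = ((t : ℝ) : ℂ) := by rw [htdef]; push_cast; ring
  have hsC0 : (s : ℂ) ≠ 0 := by exact_mod_cast hs0.ne'
  have hsC1 : ‖(s : ℂ)‖ < 1 := by
    rw [Complex.norm_real, Real.norm_eq_abs, abs_of_pos hs0]; exact hs1
  have htC1 : ‖((t : ℝ) : ℂ)‖ < 1 := by
    rw [Complex.norm_real, Real.norm_eq_abs, abs_of_pos ht0]; exact ht1
  have hΛsq : ‖Λ ^ 2‖ < 1 := by rw [norm_pow]; nlinarith [norm_nonneg Λ]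
  rw [hcast]
  -- the two limits
  have hN := rogers_limit hq0 hq1 ht0 ht1 hΛ0 hΛ1
  have hD := rogers_limit hq0 hq1 ht0 ht1 hsC0 hsC1
  rw [hcast] at hD
  -- denominator limit is nonzero
  have hsumreal : Summable (fun j : ℕ => coefA q t j * t ^ j) := by
    apply Summable.of_nonneg_of_le
      (fun j => mul_nonneg (coefA_pos hq0 hq1 ht0 ht1 j).le (pow_nonneg ht0.le j))
      (fun j => ?_)
      ((summable_geometric_of_lt_one ht0.le ht1).mul_left (Real.exp (q / (1 - q) ^ 2)))
    exact mul_le_mul_of_nonneg_right (coefA_le hq0 hq1 ht0 ht1 j) (pow_nonneg ht0.le j)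
  have hDval : Sq q t (((t : ℝ)) : ℂ) = ((∑' j : ℕ, coefA q t j * t ^ j : ℝ) : ℂ) := by
    rw [Sq, Complex.ofReal_tsum]
    apply tsum_congr
    intro j
    push_cast
    ring
  have h1le : (1 : ℝ) ≤ ∑' j : ℕ, coefA q t j * t ^ j := by
    have h0 : coefA q t 0 * t ^ 0 = 1 := by simp [coefA_zero]
    calc (1 : ℝ) = coefA q t 0 * t ^ 0 := h0.symm
      _ ≤ ∑' j : ℕ, coefA q t j * t ^ j :=
        Summable.le_tsum hsumreal 0 (fun j _ =>
          mul_nonneg (coefA_pos hq0 hq1 ht0 ht1 j).le (pow_nonneg ht0.le j))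
  have hD0 : Sq q t (((t : ℝ)) : ℂ) ≠ 0 := by
    rw [hDval]
    exact Complex.ofReal_ne_zero.mpr (by linarith)
  have hdiv := hN.div hD hD0
  -- identify the limit value with the infinite product
  have hu := qbinom hq0 hq1 ht0 ht1 hΛsq
  have hv := qbinom hq0 hq1 ht0 ht1 htC1
  have htcΛ : ‖((t : ℝ) : ℂ) * Λ ^ 2‖ < 1 := by
    rw [norm_mul]
    nlinarith [norm_nonneg (Λ ^ 2), norm_nonneg (((t : ℝ) : ℂ)), hΛsq, htC1]
  have htt : ‖((t : ℝ) : ℂ) * ((t : ℝ) : ℂ)‖ < 1 := by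
    rw [norm_mul]
    nlinarith [norm_nonneg (((t : ℝ) : ℂ))]
  have hmu : Multipliable (fun i : ℕ =>
      (1 - ((t : ℝ) : ℂ) * Λ ^ 2 * (q : ℂ) ^ i) / (1 - Λ ^ 2 * (q : ℂ) ^ i)) := by
    have := mult_ratio hq0 hq1 (((t : ℝ) : ℂ) * Λ ^ 2) (Λ ^ 2) htcΛ hΛsq
    simpa using this
  have hmw : Multipliable (fun i : ℕ =>
      (1 - ((t : ℝ) : ℂ) * (q : ℂ) ^ i) / (1 - ((t : ℝ) : ℂ) * ((t : ℝ) : ℂ) * (q : ℂ) ^ i)) :=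
    mult_ratio hq0 hq1 _ _ htC1 htt
  have hmv : Multipliable (fun i : ℕ =>
      (1 - ((t : ℝ) : ℂ) * ((t : ℝ) : ℂ) * (q : ℂ) ^ i) / (1 - ((t : ℝ) : ℂ) * (q : ℂ) ^ i)) :=
    mult_ratio hq0 hq1 _ _ htt htC1
  have hqpow1 : ∀ (c : ℂ), ‖c‖ < 1 → ∀ i : ℕ, ‖c * (q : ℂ) ^ i‖ < 1 := by
    intro c hc i
    rw [norm_mul, norm_pow, Complex.norm_real, Real.norm_eq_abs, abs_of_pos hq0]
    have h1 : q ^ i ≤ 1 := pow_le_one₀ hq0.le hq1.le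
    nlinarith [norm_nonneg c, pow_pos hq0 i]
  have hwv : ∀ i : ℕ,
      ((1 - ((t : ℝ) : ℂ) * (q : ℂ) ^ i) / (1 - ((t : ℝ) : ℂ) * ((t : ℝ) : ℂ) * (q : ℂ) ^ i))
      * ((1 - ((t : ℝ) : ℂ) * ((t : ℝ) : ℂ) * (q : ℂ) ^ i) / (1 - ((t : ℝ) : ℂ) * (q : ℂ) ^ i))
      = 1 := by
    intro i
    have h1 := one_sub_ne' (hqpow1 _ htC1 i)
    have h2 := one_sub_ne' (hqpow1 _ htt i)
    field_simp
    exact div_self (by rw [pow_two]; exact h2)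
  have h2 : (∏' i : ℕ,
      (1 - ((t : ℝ) : ℂ) * (q : ℂ) ^ i) / (1 - ((t : ℝ) : ℂ) * ((t : ℝ) : ℂ) * (q : ℂ) ^ i))
      * (∏' i : ℕ,
      (1 - ((t : ℝ) : ℂ) * ((t : ℝ) : ℂ) * (q : ℂ) ^ i) / (1 - ((t : ℝ) : ℂ) * (q : ℂ) ^ i))
      = 1 := by
    rw [← hmw.tprod_mul hmv]
    rw [tprod_congr hwv]
    exact tprod_one
  have htarget : (∏' j : ℕ,
      ((1 - ((t : ℝ) : ℂ) * Λ ^ 2 * (q : ℂ) ^ j) * (1 - ((t : ℝ) : ℂ) * (q : ℂ) ^ j)) /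
      ((1 - Λ ^ 2 * (q : ℂ) ^ j) * (1 - (((t : ℝ) : ℂ)) ^ 2 * (q : ℂ) ^ j)))
      = Sq q t (Λ ^ 2) / Sq q t (((t : ℝ)) : ℂ) := by
    have hterm : ∀ j : ℕ,
        ((1 - ((t : ℝ) : ℂ) * Λ ^ 2 * (q : ℂ) ^ j) * (1 - ((t : ℝ) : ℂ) * (q : ℂ) ^ j)) /
        ((1 - Λ ^ 2 * (q : ℂ) ^ j) * (1 - (((t : ℝ) : ℂ)) ^ 2 * (q : ℂ) ^ j))
        = ((1 - ((t : ℝ) : ℂ) * Λ ^ 2 * (q : ℂ) ^ j) / (1 - Λ ^ 2 * (q : ℂ) ^ j))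
          * ((1 - ((t : ℝ) : ℂ) * (q : ℂ) ^ j)
            / (1 - ((t : ℝ) : ℂ) * ((t : ℝ) : ℂ) * (q : ℂ) ^ j)) := by
      intro j
      rw [div_mul_div_comm, pow_two (((t : ℝ) : ℂ))]
    rw [tprod_congr hterm, hmu.tprod_mul hmw]
    have hvne : (∏' i : ℕ,
        (1 - ((t : ℝ) : ℂ) * ((t : ℝ) : ℂ) * (q : ℂ) ^ i) / (1 - ((t : ℝ) : ℂ) * (q : ℂ) ^ i))
        ≠ 0 := by rw [← hv]; exact hD0
    rw [← hu]
    have hw : (∏' i : ℕ,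
        (1 - ((t : ℝ) : ℂ) * (q : ℂ) ^ i) / (1 - ((t : ℝ) : ℂ) * ((t : ℝ) : ℂ) * (q : ℂ) ^ i))
        * Sq q t (((t : ℝ)) : ℂ) = 1 := by
      rw [hv]; exact h2
    have hwi : (∏' i : ℕ,
        (1 - ((t : ℝ) : ℂ) * (q : ℂ) ^ i) / (1 - ((t : ℝ) : ℂ) * ((t : ℝ) : ℂ) * (q : ℂ) ^ i))
        = (Sq q t (((t : ℝ)) : ℂ))⁻¹ := by
      have h3 := congrArg (· * (Sq q t (((t : ℝ)) : ℂ))⁻¹) hw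
      simpa [mul_assoc, mul_inv_cancel₀ hD0] using h3
    rw [hwi, div_eq_mul_inv]
  rw [htarget]
  apply hdiv.congr
  intro n
  rw [Pi.div_apply, div_pow, div_mul_eq_mul_div, div_div]


end
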